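/- The space of Fourier transforms = {φ(·a) : a ∈ A} is closed under the convolution product of the dual: for all a, b ∈ A there exists c ∈ A such that Σ φ(x₍₁₎·a)·φ(x₍₂₎·b) = φ(x·c) for every x ∈ A. -/
import Mathlib

open TensorProduct HopfAlgebra

set_option maxHeartbeats 1000000
set_option synthInstance.maxHeartbeats 400000

/-- The space of Fourier transforms `{φ(·a) : a ∈ A}` is closed under the convolution
product of the dual: `φ(·a) ∗ φ(·b) = φ(·c)` for some `c ∈ A`. -/
theorem fourier_transforms_closed_under_convolution
    {A : Type*} [Ring A] [HopfAlgebra ℂ A]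
    (hS : Function.Bijective (antipode (R := ℂ) (A := A)))
    (φ : A →ₗ[ℂ] ℂ) (hφ0 : φ ≠ 0)
    (hφL : ∀ a : A,
      (TensorProduct.rid ℂ A) (LinearMap.lTensor A φ (Coalgebra.comul a)) = φ a • (1 : A)) :
    ∀ a b : A, ∃ c : A, ∀ x : A,
      (TensorProduct.lid ℂ ℂ)
          (TensorProduct.map (φ ∘ₗ LinearMap.mulRight ℂ a) (φ ∘ₗ LinearMap.mulRight ℂ b)
            (Coalgebra.comul (R := ℂ) x)) = φ (x * c) := by
  intro a b
  set S : A →ₗ[ℂ] A := antipode (R := ℂ) (A := A) with hSdef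
  let e : A ≃ₗ[ℂ] A := LinearEquiv.ofBijective S hS
  set ψa : A →ₗ[ℂ] ℂ := φ ∘ₗ LinearMap.mulRight ℂ a with hψa
  set ψb : A →ₗ[ℂ] ℂ := φ ∘ₗ LinearMap.mulRight ℂ b with hψb
  set M : A ⊗[ℂ] A →ₗ[ℂ] A :=
    (TensorProduct.rid ℂ A).toLinearMap ∘ₗ LinearMap.lTensor A φ with hM
  -- the candidate c
  refine ⟨(TensorProduct.lid ℂ A)
      ((LinearMap.rTensor A (ψa ∘ₗ (e.symm : A ≃ₗ[ℂ] A).toLinearMap))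
        (Coalgebra.comul b)), ?_⟩
  intro x
  -- Rmap r = Σ φ(r b₍₂₎) • b₍₁₎
  set Rmap : A →ₗ[ℂ] A :=
    M ∘ₗ LinearMap.mulRight ℂ (Coalgebra.comul b) ∘ₗ TensorProduct.mk ℂ A A 1 with hRmap
  -- step 1 : LHS = φ ( L x * a ) with L x = Σ x₍₁₎ φ(x₍₂₎ b)
  have h1 : ∀ t : A ⊗[ℂ] A,
      (TensorProduct.lid ℂ ℂ) (TensorProduct.map ψa ψb t)
        = φ ((TensorProduct.rid ℂ A) (LinearMap.lTensor A ψb t) * a) := by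
    intro t
    induction t using TensorProduct.induction_on with
    | zero => simp
    | tmul u v => simp [hψa, hψb, smul_mul_assoc, mul_comm]
    | add t₁ t₂ ih₁ ih₂ => simp [ih₁, ih₂, add_mul]
  -- absorbing a left factor into M
  have hMg : ∀ (g : A) (z : A ⊗[ℂ] A), g * M z = M ((g ⊗ₜ[ℂ] (1 : A)) * z) := by
    intro g z
    induction z using TensorProduct.induction_on with
    | zero => simp
    | tmul u v =>
      simp [hM, Algebra.TensorProduct.tmul_mul_tmul, mul_smul_comm]
    | add z₁ z₂ ih₁ ih₂ => simp [mul_add, ih₁, ih₂]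
  -- the elementary tensor computation (E1)
  have hE1 : ∀ (z t : A ⊗[ℂ] A) (r : A),
      LinearMap.mul' ℂ A
        (TensorProduct.map S (M ∘ₗ LinearMap.mulRight ℂ t)
          (TensorProduct.assoc ℂ A A A (z ⊗ₜ[ℂ] r)))
      = M (((LinearMap.mul' ℂ A (LinearMap.rTensor A S z)) ⊗ₜ[ℂ] r) * t) := by
    intro z t r
    induction z using TensorProduct.induction_on with
    | zero => simp
    | tmul u v =>
      have : S u * M ((v ⊗ₜ[ℂ] r) * t) = M (((S u * v) ⊗ₜ[ℂ] r) * t) := by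
        rw [hMg, ← mul_assoc, Algebra.TensorProduct.tmul_mul_tmul, one_mul]
      simpa using this
    | add z₁ z₂ ih₁ ih₂ =>
      simp only [add_tmul, map_add, ih₁, ih₂, add_mul]
  -- step (A) : U (comul x) = S (L x)
  have hA : ∀ t : A ⊗[ℂ] A,
      LinearMap.mul' ℂ A
        (TensorProduct.map S (M ∘ₗ Coalgebra.comul ∘ₗ LinearMap.mulRight ℂ b) t)
      = S ((TensorProduct.rid ℂ A) (LinearMap.lTensor A ψb t)) := by
    intro t
    induction t using TensorProduct.induction_on with
    | zero => simp
    | tmul p q =>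
      have hint : M (Coalgebra.comul q * Coalgebra.comul b) = φ (q * b) • (1 : A) := by
        rw [← Bialgebra.comul_mul]; exact hφL (q * b)
      simp [hψb, hint, mul_smul_comm]
    | add t₁ t₂ ih₁ ih₂ => simp [ih₁, ih₂]
  -- step (B1) : U t = Φ (lTensor comul t)
  have hB1 : ∀ t : A ⊗[ℂ] A,
      LinearMap.mul' ℂ A
        (TensorProduct.map S (M ∘ₗ Coalgebra.comul ∘ₗ LinearMap.mulRight ℂ b) t)
      = LinearMap.mul' ℂ A
          (TensorProduct.map S (M ∘ₗ LinearMap.mulRight ℂ (Coalgebra.comul b))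
            (LinearMap.lTensor A (Coalgebra.comul (R := ℂ)) t)) := by
    intro t
    induction t using TensorProduct.induction_on with
    | zero => simp
    | tmul p q => simp [Bialgebra.comul_mul]
    | add t₁ t₂ ih₁ ih₂ => simp [ih₁, ih₂]
  -- step (B2) : Φ (assoc (rTensor comul s)) = Rmap (lid (rTensor counit s))
  have hB2 : ∀ s : A ⊗[ℂ] A,
      LinearMap.mul' ℂ A
        (TensorProduct.map S (M ∘ₗ LinearMap.mulRight ℂ (Coalgebra.comul b))
          (TensorProduct.assoc ℂ A A A
            (LinearMap.rTensor A (Coalgebra.comul (R := ℂ)) s)))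
      = Rmap ((TensorProduct.lid ℂ A)
          (LinearMap.rTensor A (Coalgebra.counit (R := ℂ)) s)) := by
    intro s
    induction s using TensorProduct.induction_on with
    | zero => simp
    | tmul y r =>
      have h := hE1 (Coalgebra.comul y) (Coalgebra.comul b) r
      rw [LinearMap.rTensor_tmul, h]
      rw [mul_antipode_rTensor_comul_apply]
      have : (algebraMap ℂ A (Coalgebra.counit y)) ⊗ₜ[ℂ] r
          = Coalgebra.counit (R := ℂ) y • ((1 : A) ⊗ₜ[ℂ] r) := by
        rw [Algebra.algebraMap_eq_smul_one, smul_tmul']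
      rw [this, smul_mul_assoc, map_smul]
      simp [hRmap]
    | add s₁ s₂ ih₁ ih₂ => simp [ih₁, ih₂]
  -- combine : S (L x) = Rmap x
  have hKey : S ((TensorProduct.rid ℂ A) (LinearMap.lTensor A ψb (Coalgebra.comul x)))
      = Rmap x := by
    rw [← hA, hB1, ← Coalgebra.coassoc_apply, hB2, Coalgebra.rTensor_counit_comul]
    simp
  -- L x = e.symm (Rmap x)
  have hL : (TensorProduct.rid ℂ A) (LinearMap.lTensor A ψb (Coalgebra.comul x))
      = e.symm (Rmap x) := by
    apply_fun e using e.injective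
    rw [LinearEquiv.apply_symm_apply]
    exact hKey
  -- step 2 : φ (e.symm (Rmap x) * a) = φ (x * c)
  have h2 : ∀ t : A ⊗[ℂ] A,
      φ (e.symm (M ((((1 : A) ⊗ₜ[ℂ] x) * t))) * a)
      = φ (x * (TensorProduct.lid ℂ A)
          ((LinearMap.rTensor A (ψa ∘ₗ (e.symm : A ≃ₗ[ℂ] A).toLinearMap)) t)) := by
    intro t
    induction t using TensorProduct.induction_on with
    | zero => simp
    | tmul w₁ w₂ =>
      simp [hM, hψa, Algebra.TensorProduct.tmul_mul_tmul, smul_mul_assoc,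
        mul_smul_comm, mul_comm]
    | add t₁ t₂ ih₁ ih₂ => simp [mul_add, add_mul, ih₁, ih₂]
  rw [h1 (Coalgebra.comul x), hL]
  have := h2 (Coalgebra.comul b)
  simpa [hRmap] using this
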